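/- Assuming the difference identity F(n,m,k) - F(n-1,m,k) = F(n,m,k-1) for k ≥ 2, the recurrence F(n,m,k) = n·F(n,m-1,k) - k·F(n-1,m-1,k+1) (for n, m, k ≥ 1) is equivalent to Cereceda's recurrence (n+k)·F(n,m,k) = k·F(n,m,k+1) + F(n,m+1,k) (for n ≥ 1, k ≥ 1, m ≥ 0): each family of identities implies the other. -/
import Mathlib


theorem recurrences_equivalent (F : ℕ → ℕ → ℕ → ℤ)
    (hdiff : ∀ n m k : ℕ, 1 ≤ n → 2 ≤ k → F n m k - F (n - 1) m k = F n m (k - 1)) :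
    (∀ n m k : ℕ, 1 ≤ n → 1 ≤ m → 1 ≤ k →
        F n m k = (n : ℤ) * F n (m - 1) k - (k : ℤ) * F (n - 1) (m - 1) (k + 1)) ↔
    (∀ n m k : ℕ, 1 ≤ n → 1 ≤ k →
        ((n : ℤ) + k) * F n m k = (k : ℤ) * F n m (k + 1) + F n (m + 1) k) := by
  constructor
  · intro hA n m k hn hk
    have h1 := hA n (m + 1) k hn (by omega) hk
    have h2 := hdiff n m (k + 1) hn (by omega)
    simp only [Nat.add_sub_cancel] at h1 h2
    linear_combination -h1 - (k : ℤ) * h2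
  · intro hB n m k hn hm hk
    have h1 := hB n (m - 1) k hn hk
    rw [Nat.sub_add_cancel hm] at h1
    have h2 := hdiff n (m - 1) (k + 1) hn (by omega)
    simp only [Nat.add_sub_cancel] at h2
    linear_combination -h1 - (k : ℤ) * h2
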